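/- arXiv:1610.03973 — 6 statements merged into one kernel-verified Lean document; each statement's English description precedes it below -/
import Mathlib

section
/- Let A be a symmetric 2×2 complex matrix (Aᵀ = A), and let u₁, u₂ ∈ ℂ² be orthonormal vectors with A·Aᴴ·u_j = μ_j·u_j for j = 1, 2 and μ₁ ≠ μ₂. Then u₁ᴴ·A·conj(u₂) = 0 and A = c₁·u₁u₁ᵀ + c₂·u₂u₂ᵀ, where c_j = u_jᴴ·A·conj(u_j) and u_ju_jᵀ denotes the outer product (a 2×2 matrix). -/
open Matrix

/-- **Takagi-type decomposition of a symmetric `2 × 2` matrix.**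
If `A` is complex symmetric and `u₁, u₂` are orthonormal eigenvectors of `A·Aᴴ`
with distinct eigenvalues, then `u₁ᴴ·A·conj(u₂) = 0` and
`A = c₁·u₁u₁ᵀ + c₂·u₂u₂ᵀ` where `c_j = u_jᴴ·A·conj(u_j)`. -/
theorem symmetric_matrix_takagi_decomposition
    (A : Matrix (Fin 2) (Fin 2) ℂ) (hA : Aᵀ = A)
    (u₁ u₂ : Fin 2 → ℂ)
    (h11 : star u₁ ⬝ᵥ u₁ = 1) (h22 : star u₂ ⬝ᵥ u₂ = 1)
    (h12 : star u₁ ⬝ᵥ u₂ = 0)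
    (μ₁ μ₂ : ℂ)
    (hu₁ : (A * Aᴴ).mulVec u₁ = μ₁ • u₁)
    (hu₂ : (A * Aᴴ).mulVec u₂ = μ₂ • u₂)
    (hμ : μ₁ ≠ μ₂) :
    star u₁ ⬝ᵥ A.mulVec (star u₂) = 0 ∧
    A = (star u₁ ⬝ᵥ A.mulVec (star u₁)) • Matrix.vecMulVec u₁ u₁
      + (star u₂ ⬝ᵥ A.mulVec (star u₂)) • Matrix.vecMulVec u₂ u₂ := by
  have h21 : star u₂ ⬝ᵥ u₁ = 0 := by
    have := congrArg star h12
    simpa [star_dotProduct, dotProduct_comm, mul_comm] using this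
  have hsym : ∀ i k, A i k = A k i := fun i k => by
    conv_lhs => rw [← hA]
    rfl
  -- resolution of identity
  set U : Matrix (Fin 2) (Fin 2) ℂ := Matrix.of ![star u₁, star u₂] with hU
  have hUU : U * Uᴴ = 1 := by
    ext i j
    fin_cases i <;> fin_cases j <;>
      first
      | simpa [Matrix.mul_apply, Matrix.conjTranspose_apply, Fin.sum_univ_two,
          dotProduct, hU] using h11
      | simpa [Matrix.mul_apply, Matrix.conjTranspose_apply, Fin.sum_univ_two,
          dotProduct, hU] using h12
      | simpa [Matrix.mul_apply, Matrix.conjTranspose_apply, Fin.sum_univ_two,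
          dotProduct, hU] using h21
      | simpa [Matrix.mul_apply, Matrix.conjTranspose_apply, Fin.sum_univ_two,
          dotProduct, hU] using h22
  have hUUl : Uᴴ * U = 1 := mul_eq_one_comm.mp hUU
  have hres : Matrix.vecMulVec u₁ (star u₁) + Matrix.vecMulVec u₂ (star u₂) = 1 := by
    ext i j
    have h := congrFun (congrFun hUUl i) j
    simpa [Matrix.mul_apply, Matrix.conjTranspose_apply, Fin.sum_univ_two, hU,
      Matrix.vecMulVec_apply] using h
  have hcomp : ∀ v : Fin 2 → ℂ,
      v = (star u₁ ⬝ᵥ v) • u₁ + (star u₂ ⬝ᵥ v) • u₂ := by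
    intro v
    have h := congrArg (fun M => M.mulVec v) hres
    simp only [Matrix.add_mulVec, Matrix.one_mulVec] at h
    funext i
    have hi := congrFun h.symm i
    fin_cases i <;> simp [Matrix.mulVec, Matrix.vecMulVec_apply, dotProduct, Fin.sum_univ_two,
      Pi.add_apply, Pi.smul_apply, smul_eq_mul] at hi ⊢ <;> linear_combination hi
  have hC : ∀ v : Fin 2 → ℂ, Aᴴ.mulVec v = star (A.mulVec (star v)) := by
    intro v
    funext i
    simp only [Matrix.mulVec, dotProduct, Matrix.conjTranspose_apply, Pi.star_apply,
      Fin.sum_univ_two, star_add, star_mul', star_star]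
    rw [hsym 0 i, hsym 1 i]
  set c₁ := star u₁ ⬝ᵥ A.mulVec (star u₁) with hc₁
  set c₂ := star u₂ ⬝ᵥ A.mulVec (star u₂) with hc₂
  set b1 := star u₁ ⬝ᵥ A.mulVec (star u₂) with hb1
  set b2 := star u₂ ⬝ᵥ A.mulVec (star u₁) with hb2
  have hB1 : A.mulVec (star u₁) = c₁ • u₁ + b2 • u₂ := hcomp _
  have hB2 : A.mulVec (star u₂) = b1 • u₁ + c₂ • u₂ := hcomp _
  have hbb : b1 = b2 := by
    rw [hb1, hb2, Matrix.dotProduct_mulVec, ← Matrix.mulVec_transpose, hA, dotProduct_comm]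
  have key₁ : star c₁ • (c₁ • u₁ + b2 • u₂) + star b2 • (b1 • u₁ + c₂ • u₂) = μ₁ • u₁ := by
    calc star c₁ • (c₁ • u₁ + b2 • u₂) + star b2 • (b1 • u₁ + c₂ • u₂)
        = star c₁ • A.mulVec (star u₁) + star b2 • A.mulVec (star u₂) := by rw [hB1, hB2]
      _ = A.mulVec (star c₁ • star u₁ + star b2 • star u₂) := by
          rw [Matrix.mulVec_add, Matrix.mulVec_smul, Matrix.mulVec_smul]
      _ = A.mulVec (star (c₁ • u₁ + b2 • u₂)) := by
          refine congrArg _ ?_; funext i; simp [mul_comm]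
      _ = A.mulVec (star (A.mulVec (star u₁))) := by rw [hB1]
      _ = A.mulVec (Aᴴ.mulVec u₁) := by rw [hC]
      _ = (A * Aᴴ).mulVec u₁ := by rw [Matrix.mulVec_mulVec]
      _ = μ₁ • u₁ := hu₁
  have key₂ : star b1 • (c₁ • u₁ + b2 • u₂) + star c₂ • (b1 • u₁ + c₂ • u₂) = μ₂ • u₂ := by
    calc star b1 • (c₁ • u₁ + b2 • u₂) + star c₂ • (b1 • u₁ + c₂ • u₂)
        = star b1 • A.mulVec (star u₁) + star c₂ • A.mulVec (star u₂) := by rw [hB1, hB2]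
      _ = A.mulVec (star b1 • star u₁ + star c₂ • star u₂) := by
          rw [Matrix.mulVec_add, Matrix.mulVec_smul, Matrix.mulVec_smul]
      _ = A.mulVec (star (b1 • u₁ + c₂ • u₂)) := by
          refine congrArg _ ?_; funext i; simp [mul_comm]
      _ = A.mulVec (star (A.mulVec (star u₂))) := by rw [hB2]
      _ = A.mulVec (Aᴴ.mulVec u₂) := by rw [hC]
      _ = (A * Aᴴ).mulVec u₂ := by rw [Matrix.mulVec_mulVec]
      _ = μ₂ • u₂ := hu₂
  have E11 : star c₁ * c₁ + star b2 * b1 = μ₁ := by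
    have := congrArg (fun v => star u₁ ⬝ᵥ v) key₁
    simpa [dotProduct_add, dotProduct_smul, h11, h12, smul_eq_mul] using this
  have E21 : star c₁ * b2 + star b2 * c₂ = 0 := by
    have := congrArg (fun v => star u₂ ⬝ᵥ v) key₁
    simpa [dotProduct_add, dotProduct_smul, h22, h21, smul_eq_mul] using this
  have E12 : star b1 * c₁ + star c₂ * b1 = 0 := by
    have := congrArg (fun v => star u₁ ⬝ᵥ v) key₂
    simpa [dotProduct_add, dotProduct_smul, h11, h12, smul_eq_mul] using this
  have E22 : star b1 * b2 + star c₂ * c₂ = μ₂ := by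
    have := congrArg (fun v => star u₂ ⬝ᵥ v) key₂
    simpa [dotProduct_add, dotProduct_smul, h22, h21, smul_eq_mul] using this
  rw [← hbb] at E11 E21 E22
  have h0 : (μ₁ - μ₂) * b1 = 0 := by
    linear_combination (-b1) * E11 + b1 * E22 + c₁ * E21 - c₂ * E12
  have hb0 : b1 = 0 := by
    rcases mul_eq_zero.mp h0 with h | h
    · exact absurd (sub_eq_zero.mp h) hμ
    · exact h
  refine ⟨hb0, ?_⟩
  have hB1' : A.mulVec (star u₁) = c₁ • u₁ := by
    rw [hB1, ← hbb, hb0]; simp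
  have hB2' : A.mulVec (star u₂) = c₂ • u₂ := by
    rw [hB2, hb0]; simp
  have hres' : Matrix.vecMulVec (star u₁) u₁ + Matrix.vecMulVec (star u₂) u₂ = 1 := by
    ext i j
    have h := congrArg star (congrFun (congrFun hres i) j)
    simpa [Matrix.vecMulVec_apply, Matrix.one_apply, eq_comm, mul_comm,
      apply_ite (star : ℂ → ℂ)] using h
  have hAv : ∀ x y : Fin 2 → ℂ, A * Matrix.vecMulVec x y = Matrix.vecMulVec (A.mulVec x) y := by
    intro x y
    ext i j
    simp only [Matrix.mul_apply, Matrix.vecMulVec_apply, Matrix.mulVec, dotProduct,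
      Fin.sum_univ_two]
    ring
  calc A = A * 1 := (mul_one A).symm
    _ = A * Matrix.vecMulVec (star u₁) u₁ + A * Matrix.vecMulVec (star u₂) u₂ := by
        rw [← hres', mul_add]
    _ = Matrix.vecMulVec (A.mulVec (star u₁)) u₁ + Matrix.vecMulVec (A.mulVec (star u₂)) u₂ := by
        rw [hAv, hAv]
    _ = c₁ • Matrix.vecMulVec u₁ u₁ + c₂ • Matrix.vecMulVec u₂ u₂ := by
        rw [hB1', hB2']
        ext i j
        simp [Matrix.vecMulVec_apply, mul_assoc]
end

section
/- Let A be a symmetric 2×2 complex matrix (Aᵀ = A), and let u₁, u₂ ∈ ℂ² be orthonormal vectors with A·Aᴴ·u_j = μ_j·u_j for j = 1, 2 and μ₁ ≠ μ₂. Set c_j = u_jᴴ·A·conj(u_j). Then A·conj(u_j) = c_j·u_j and |c_j|² = μ_j for j = 1, 2. -/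
open Matrix

lemma complete_pair (u w : Fin 2 → ℂ)
    (huu : star u ⬝ᵥ u = 1) (hww : star w ⬝ᵥ w = 1)
    (huw : star u ⬝ᵥ w = 0) (hwu : star w ⬝ᵥ u = 0)
    (v : Fin 2 → ℂ) :
    v = (star u ⬝ᵥ v) • u + (star w ⬝ᵥ v) • w := by
  have hU : (Matrix.of ![star u, star w]) * (Matrix.of ![star u, star w])ᴴ = 1 := by
    simp only [dotProduct, Fin.sum_univ_two, Pi.star_apply, Complex.star_def] at huu hww huw hwu
    ext i j
    fin_cases i <;> fin_cases j <;>
      simp [Matrix.mul_apply, Matrix.conjTranspose_apply, Matrix.one_apply,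
        Fin.sum_univ_two, Complex.star_def]
    · linear_combination huu
    · linear_combination huw
    · linear_combination hwu
    · linear_combination hww
  have hVU : (Matrix.of ![star u, star w])ᴴ * (Matrix.of ![star u, star w]) = 1 :=
    mul_eq_one_comm.mp hU
  have h2 : ((Matrix.of ![star u, star w])ᴴ * (Matrix.of ![star u, star w])) *ᵥ v
      = (star u ⬝ᵥ v) • u + (star w ⬝ᵥ v) • w := by
    funext i
    simp [Matrix.mulVec, Matrix.mul_apply, dotProduct, Fin.sum_univ_two,
      Matrix.conjTranspose_apply, Complex.star_def]
    ring
  rw [← h2, hVU, Matrix.one_mulVec]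

lemma one_side (A : Matrix (Fin 2) (Fin 2) ℂ) (hA : Aᵀ = A)
    (u w : Fin 2 → ℂ)
    (huu : star u ⬝ᵥ u = 1) (hww : star w ⬝ᵥ w = 1)
    (huw : star u ⬝ᵥ w = 0) (hwu : star w ⬝ᵥ u = 0)
    (μ ν : ℂ)
    (hu : (A * Aᴴ).mulVec u = μ • u)
    (hw : (A * Aᴴ).mulVec w = ν • w)
    (hμν : μ ≠ ν)
    (c : ℂ) (hc : c = star u ⬝ᵥ A.mulVec (star u)) :
    A.mulVec (star u) = c • u ∧ (Complex.normSq c : ℂ) = μ := by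
  have hsym : ∀ i j, A j i = A i j := fun i j => by
    conv_lhs => rw [← hA]
    rfl
  have hT : ∀ x : Fin 2 → ℂ, Aᴴ *ᵥ x = star (A *ᵥ (star x)) := by
    intro x
    funext i
    simp [Matrix.mulVec, dotProduct, Matrix.conjTranspose_apply, Fin.sum_univ_two,
      hsym i 0, hsym i 1]
    fin_cases i <;> simp
  have hTT : ∀ x : Fin 2 → ℂ, (A * Aᴴ) *ᵥ x = A *ᵥ star (A *ᵥ star x) := by
    intro x
    rw [← Matrix.mulVec_mulVec, hT]
  -- key : (A Aᴴ) (A *ᵥ star u) = star μ • (A *ᵥ star u)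
  have inner : A *ᵥ star (A *ᵥ star u) = μ • u := by rw [← hTT, hu]
  have key : (A * Aᴴ) *ᵥ (A *ᵥ star u) = star μ • (A *ᵥ star u) := by
    rw [hTT, inner, star_smul, Matrix.mulVec_smul]
  have hβ0 : star w ⬝ᵥ (A *ᵥ star u) = 0 := by
    have e1 : star w ⬝ᵥ ((A * Aᴴ) *ᵥ (A *ᵥ star u)) = star μ * (star w ⬝ᵥ (A *ᵥ star u)) := by
      rw [key, dotProduct_smul, smul_eq_mul]
    have e2 : star w ⬝ᵥ ((A * Aᴴ) *ᵥ (A *ᵥ star u)) = star ν * (star w ⬝ᵥ (A *ᵥ star u)) := by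
      rw [Matrix.dotProduct_mulVec]
      have h2 : star w ᵥ* (A * Aᴴ) = star ν • star w := by
        have h := congrArg star hw
        rw [Matrix.star_mulVec] at h
        simpa [Matrix.conjTranspose_mul, Matrix.conjTranspose_conjTranspose,
          star_smul] using h
      rw [h2, smul_dotProduct, smul_eq_mul]
    have hz : (star μ - star ν) * (star w ⬝ᵥ (A *ᵥ star u)) = 0 := by
      rw [sub_mul, ← e1, ← e2, sub_self]
    have hne : star μ - star ν ≠ 0 := sub_ne_zero.mpr (fun h => hμν (star_injective h))
    exact (mul_eq_zero.mp hz).resolve_left hne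
  have hv_eq : A *ᵥ star u = c • u := by
    have h := complete_pair u w huu hww huw hwu (A *ᵥ star u)
    rw [hβ0, zero_smul, add_zero, ← hc] at h
    exact h
  refine ⟨hv_eq, ?_⟩
  have h2 : (A * Aᴴ) *ᵥ u = (star c * c) • u := by
    rw [hTT, hv_eq, star_smul, Matrix.mulVec_smul, hv_eq, smul_smul]
  have h3 : μ • u = (star c * c) • u := by rw [← hu, h2]
  have h4 : μ = star c * c := by
    have h := congrArg (fun x => star u ⬝ᵥ x) h3
    simpa [dotProduct_smul, huu, smul_eq_mul] using h
  have h5 : (Complex.normSq c : ℂ) = star c * c := by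
    rw [← Complex.mul_conj c]
    ring_nf
    rfl
  rw [h5, ← h4]

/-- **Eigenvectors of `A·Aᴴ` solve the con-eigenvalue problem.**
If `A` is complex symmetric and `u₁, u₂` are orthonormal eigenvectors of `A·Aᴴ`
with distinct eigenvalues `μ₁ ≠ μ₂`, then with `c_j = u_jᴴ·A·conj(u_j)` one has
`A·conj(u_j) = c_j·u_j` and `|c_j|² = μ_j` for `j = 1, 2`. -/
theorem con_eigenvalue_problem_solution
    (A : Matrix (Fin 2) (Fin 2) ℂ) (hA : Aᵀ = A)
    (u₁ u₂ : Fin 2 → ℂ)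
    (h11 : star u₁ ⬝ᵥ u₁ = 1) (h22 : star u₂ ⬝ᵥ u₂ = 1)
    (h12 : star u₁ ⬝ᵥ u₂ = 0)
    (μ₁ μ₂ : ℂ)
    (hu₁ : (A * Aᴴ).mulVec u₁ = μ₁ • u₁)
    (hu₂ : (A * Aᴴ).mulVec u₂ = μ₂ • u₂)
    (hμ : μ₁ ≠ μ₂)
    (c₁ c₂ : ℂ)
    (hc₁ : c₁ = star u₁ ⬝ᵥ A.mulVec (star u₁))
    (hc₂ : c₂ = star u₂ ⬝ᵥ A.mulVec (star u₂)) :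
    (A.mulVec (star u₁) = c₁ • u₁ ∧ (Complex.normSq c₁ : ℂ) = μ₁) ∧
    (A.mulVec (star u₂) = c₂ • u₂ ∧ (Complex.normSq c₂ : ℂ) = μ₂) := by
  have h21 : star u₂ ⬝ᵥ u₁ = 0 := by
    have h := congrArg star h12
    simpa [dotProduct, Fin.sum_univ_two, mul_comm] using h
  exact ⟨one_side A hA u₁ u₂ h11 h22 h12 h21 μ₁ μ₂ hu₁ hu₂ hμ c₁ hc₁,
         one_side A hA u₂ u₁ h22 h11 h21 h12 μ₂ μ₁ hu₂ hu₁ hμ.symm c₂ hc₂⟩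
end

section
/- Let A be a symmetric 2×2 complex matrix (Aᵀ = A), and let u₁, u₂ ∈ ℂ² be orthonormal vectors with A·Aᴴ·u_j = μ_j·u_j for j = 1, 2 and μ₁ ≠ μ₂. Write c_j = u_jᴴ·A·conj(u_j) = λ_j·e^{−iγ_j} with λ_j = |c_j| and γ_j ∈ ℝ. Then the four vectors ψ_{j,±} = (±e^{−iγ_j}·u_j, conj(u_j))/√2 ∈ ℂ⁴ (j = 1,2) form an orthonormal basis of ℂ⁴, and H(A)·ψ_{j,±} = ±λ_j·ψ_{j,±}. -/
open Matrix

private lemma star_exp_mul' (γ : ℝ) :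
    (starRingEnd ℂ) (Complex.exp (-(γ:ℂ) * Complex.I)) * Complex.exp (-(γ:ℂ) * Complex.I) = 1 := by
  rw [← Complex.exp_conj, ← Complex.exp_add]
  simp

private lemma mapconj_mulVec' (M : Matrix (Fin 2) (Fin 2) ℂ) (w : Fin 2 → ℂ) :
    (M.map (starRingEnd ℂ)).mulVec (star w) = star (M.mulVec w) := by
  funext i
  simp only [Matrix.mulVec, dotProduct, Fin.sum_univ_two, Matrix.map_apply, Pi.star_apply]
  rw [star_add, star_mul', star_mul']
  rfl

private lemma complete2' (u : Fin 2 → Fin 2 → ℂ)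
    (horth : ∀ j k : Fin 2, star (u j) ⬝ᵥ u k = if j = k then 1 else 0) (v : Fin 2 → ℂ) :
    (star (u 0) ⬝ᵥ v) • u 0 + (star (u 1) ⬝ᵥ v) • u 1 = v := by
  set U : Matrix (Fin 2) (Fin 2) ℂ := Matrix.of u with hU
  have h1 : U * Uᴴ = 1 := by
    ext j k
    have h := horth k j
    simp only [dotProduct, Fin.sum_univ_two, Pi.star_apply] at h
    simp only [Matrix.mul_apply, Matrix.conjTranspose_apply, Matrix.one_apply,
      Fin.sum_univ_two, hU, Matrix.of_apply]
    by_cases hjk : j = k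
    · subst hjk
      rw [if_pos rfl] at h ⊢
      linear_combination h
    · rw [if_neg hjk]
      rw [if_neg (Ne.symm hjk)] at h
      linear_combination h
  have h2 : Uᴴ * U = 1 := mul_eq_one_comm.mp h1
  have e00 := congrFun (congrFun h2 0) 0
  have e01 := congrFun (congrFun h2 0) 1
  have e10 := congrFun (congrFun h2 1) 0
  have e11 := congrFun (congrFun h2 1) 1
  simp [Matrix.mul_apply, Matrix.conjTranspose_apply, Matrix.one_apply, Fin.sum_univ_two, hU]
    at e00 e01 e10 e11
  funext i
  fin_cases i <;> simp [dotProduct, Fin.sum_univ_two]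
  · linear_combination v 0 * e00 + v 1 * e10
  · linear_combination v 0 * e01 + v 1 * e11

private lemma key_coneigen' (A : Matrix (Fin 2) (Fin 2) ℂ) (hA : Aᵀ = A)
    (u : Fin 2 → Fin 2 → ℂ)
    (horth : ∀ j k : Fin 2, star (u j) ⬝ᵥ u k = if j = k then 1 else 0)
    (μ : Fin 2 → ℂ)
    (hu : ∀ j : Fin 2, (A * Aᴴ).mulVec (u j) = μ j • u j)
    (hμ : μ 0 ≠ μ 1)
    (c : Fin 2 → ℂ)
    (hc : ∀ j : Fin 2, c j = star (u j) ⬝ᵥ A.mulVec (star (u j))) :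
    ∀ j : Fin 2, A.mulVec (star (u j)) = c j • u j := by
  have hsym : ∀ a b, A a b = A b a := fun a b => congrFun (congrFun hA b) a
  set M := A * Aᴴ with hM
  have hMH : Mᴴ = M := by rw [hM, conjTranspose_mul, conjTranspose_conjTranspose]
  have adj : ∀ (k : Fin 2) (w : Fin 2 → ℂ),
      star (u k) ⬝ᵥ M.mulVec w = star (μ k) * (star (u k) ⬝ᵥ w) := by
    intro k w
    rw [Matrix.dotProduct_mulVec]
    have h1 : star (u k) ᵥ* M = star (μ k) • star (u k) := by
      rw [← hMH, ← Matrix.star_mulVec, hu k, star_smul]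
    rw [h1, smul_dotProduct, smul_eq_mul]
  have hμreal : ∀ k, star (μ k) = μ k := by
    intro k
    have h := adj k (u k)
    rw [hu k, dotProduct_smul, horth k k] at h
    simpa using h.symm
  have hATA : Aᴴ * A = (A * Aᴴ).map (starRingEnd ℂ) := by
    ext i k
    simp only [Matrix.mul_apply, Matrix.conjTranspose_apply, Matrix.map_apply,
      Fin.sum_univ_two]
    rw [map_add (starRingEnd ℂ), _root_.map_mul, _root_.map_mul]
    simp only [starRingEnd_apply, star_star]
    rw [hsym i 0, hsym i 1, hsym k 0, hsym k 1]
  intro j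
  set v := A.mulVec (star (u j)) with hv
  have h1 : M.mulVec v = μ j • v := by
    rw [hv, Matrix.mulVec_mulVec, hM, Matrix.mul_assoc, ← Matrix.mulVec_mulVec, hATA,
      mapconj_mulVec', hu j, star_smul, hμreal j, Matrix.mulVec_smul]
  have hd : ∀ k : Fin 2, k ≠ j → star (u k) ⬝ᵥ v = 0 := by
    intro k hkj
    have h2 := adj k v
    rw [h1, dotProduct_smul, hμreal k, smul_eq_mul] at h2
    have hne : μ k ≠ μ j := by
      have hj01 : j = 0 ∨ j = 1 := by fin_cases j <;> decide
      have hk01 : k = 0 ∨ k = 1 := by fin_cases k <;> decide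
      rcases hj01 with rfl | rfl <;> rcases hk01 with rfl | rfl <;>
        first | exact absurd rfl hkj | exact hμ | exact fun h => hμ h.symm
    have h3 : (μ j - μ k) * (star (u k) ⬝ᵥ v) = 0 := by linear_combination h2
    rcases mul_eq_zero.mp h3 with h | h
    · exact absurd (by linear_combination h : μ j = μ k) hne.symm
    · exact h
  have hcomp := complete2' u horth v
  have hj01 : j = 0 ∨ j = 1 := by fin_cases j <;> decide
  rcases hj01 with rfl | rfl
  · rw [hd 1 (by decide), ← hc 0] at hcomp
    simp only [zero_smul, add_zero] at hcomp
    exact hcomp.symm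
  · rw [hd 0 (by decide), ← hc 1] at hcomp
    simp only [zero_smul, zero_add] at hcomp
    exact hcomp.symm

private lemma dot_elim' (r a b : ℂ) (f g f' g' : Fin 2 → ℂ) :
    star (r • Sum.elim (fun i => a * f i) (fun i => star (g i))) ⬝ᵥ
      (r • Sum.elim (fun i => b * f' i) (fun i => star (g' i)))
    = star r * r * (star a * b * (star f ⬝ᵥ f') + (starRingEnd ℂ) (star g ⬝ᵥ g')) := by
  simp only [dotProduct, Fintype.sum_sum_type, Fin.sum_univ_two, Pi.smul_apply, Pi.star_apply,
    Sum.elim_inl, Sum.elim_inr, smul_eq_mul, star_add, star_mul', star_star, map_add,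
    _root_.map_mul, starRingEnd_apply]
  ring

/-- **Bloch eigenstates of the in-plane chiral Hamiltonian.**
Let `A` be complex symmetric with orthonormal eigenvectors `u 0, u 1`ized of
`A·Aᴴ` for distinct eigenvalues, and write the con-eigenvalues as
`c j = λ_j e^{-iγ_j}` with `λ_j = |c j|`. Then the four vectors
`ψ (j, ±) = (± e^{-iγ_j} u_j, conj u_j)/√2` form an orthonormal basis of `ℂ⁴`
and satisfy `H(A)·ψ (j, ±) = ± λ_j ψ (j, ±)`. -/
theorem bloch_eigenstates_chiral_hamiltonian
    (A : Matrix (Fin 2) (Fin 2) ℂ) (hA : Aᵀ = A)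
    (u : Fin 2 → Fin 2 → ℂ)
    (horth : ∀ j k : Fin 2, star (u j) ⬝ᵥ u k = if j = k then 1 else 0)
    (μ : Fin 2 → ℂ)
    (hu : ∀ j : Fin 2, (A * Aᴴ).mulVec (u j) = μ j • u j)
    (hμ : μ 0 ≠ μ 1)
    (c : Fin 2 → ℂ)
    (hc : ∀ j : Fin 2, c j = star (u j) ⬝ᵥ A.mulVec (star (u j)))
    (lam γ : Fin 2 → ℝ)
    (hlam : ∀ j : Fin 2, lam j = ‖c j‖)
    (hγ : ∀ j : Fin 2, c j = (lam j : ℂ) * Complex.exp (-(γ j : ℂ) * Complex.I))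
    (ψ : Fin 2 × Bool → (Fin 2 ⊕ Fin 2 → ℂ))
    (hψ : ∀ j : Fin 2, ∀ s : Bool,
      ψ (j, s) = ((Real.sqrt 2 : ℂ))⁻¹ •
        Sum.elim
          (fun i => (if s then (1 : ℂ) else -1)
            * Complex.exp (-(γ j : ℂ) * Complex.I) * u j i)
          (fun i => star (u j i))) :
    (∀ p q : Fin 2 × Bool, star (ψ p) ⬝ᵥ ψ q = if p = q then 1 else 0) ∧
    Submodule.span ℂ (Set.range ψ) = ⊤ ∧
    (∀ j : Fin 2, ∀ s : Bool,
      (Matrix.fromBlocks 0 A Aᴴ 0).mulVec (ψ (j, s))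
        = ((if s then (1 : ℂ) else -1) * (lam j : ℂ)) • ψ (j, s)) := by
  have hr : star (((Real.sqrt 2 : ℝ):ℂ))⁻¹ * (((Real.sqrt 2 : ℝ):ℂ))⁻¹ = (2:ℂ)⁻¹ := by
    rw [show star ((((Real.sqrt 2:ℝ)):ℂ)⁻¹) = (((Real.sqrt 2:ℝ)):ℂ)⁻¹ by
      rw [star_inv₀, Complex.star_def, Complex.conj_ofReal]]
    rw [← mul_inv, ← Complex.ofReal_mul, Real.mul_self_sqrt (by norm_num)]
    norm_num
  -- Part 1: orthonormality
  have part1 : ∀ p q : Fin 2 × Bool, star (ψ p) ⬝ᵥ ψ q = if p = q then 1 else 0 := by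
    rintro ⟨j, s⟩ ⟨k, t⟩
    rw [hψ j s, hψ k t, dot_elim', hr]
    by_cases hjk : j = k
    · subst hjk
      rw [horth j j, if_pos rfl]
      have hE := star_exp_mul' (γ j)
      simp only [starRingEnd_apply] at hE
      cases s <;> cases t <;>
        simp only [if_true, if_false, Prod.mk.injEq, and_true, and_false, true_and,
          eq_self_iff_true, and_self, Bool.false_eq_true, Bool.true_eq_false, star_mul',
          star_one, star_neg, mul_one, starRingEnd_apply] <;>
        first
        | linear_combination (2:ℂ)⁻¹ * hE
        | linear_combination (-(2:ℂ)⁻¹) * hE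
    · rw [horth j k, if_neg hjk, if_neg (fun h => hjk (congrArg Prod.fst h))]
      simp
  refine ⟨part1, ?_, ?_⟩
  · -- span
    have hli : LinearIndependent ℂ ψ := by
      rw [Fintype.linearIndependent_iff]
      intro g hg p
      have h := congrArg (fun w => star (ψ p) ⬝ᵥ w) hg
      simp only [Fintype.sum_prod_type, Fin.sum_univ_two, Fintype.sum_bool] at h
      simp only [dotProduct_add, dotProduct_smul, smul_eq_mul, dotProduct_zero, part1] at h
      revert h
      obtain ⟨j, s⟩ := p
      have hj01 : j = 0 ∨ j = 1 := by fin_cases j <;> decide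
      rcases hj01 with rfl | rfl <;> cases s <;> (intro h; simpa using h)
    exact hli.span_eq_top_of_card_eq_finrank (by simp)
  · -- eigen-equation
    have hkey := key_coneigen' A hA u horth μ hu hμ c hc
    have hsym : ∀ a b, A a b = A b a := fun a b => congrFun (congrFun hA b) a
    have hAH : Aᴴ = A.map (starRingEnd ℂ) := by
      ext i k
      simp only [Matrix.conjTranspose_apply, Matrix.map_apply, starRingEnd_apply]
      rw [hsym k i]
    have hkey2 : ∀ j, Aᴴ.mulVec (u j) = star (c j) • star (u j) := by
      intro j
      have : Aᴴ.mulVec (u j) = star (A.mulVec (star (u j))) := by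
        rw [hAH, ← mapconj_mulVec' A (star (u j)), star_star]
      rw [this, hkey j, star_smul]
    intro j s
    rw [hψ j s, Matrix.mulVec_smul]
    rw [smul_comm]
    congr 1
    rw [Matrix.fromBlocks_mulVec]
    have hcl : (Sum.elim
        (fun i => (if s then (1:ℂ) else -1) * Complex.exp (-(γ j : ℂ) * Complex.I) * u j i)
        (fun i => star (u j i))) ∘ Sum.inl
        = ((if s then (1:ℂ) else -1) * Complex.exp (-(γ j : ℂ) * Complex.I)) • u j := rfl
    have hcr : (Sum.elim
        (fun i => (if s then (1:ℂ) else -1) * Complex.exp (-(γ j : ℂ) * Complex.I) * u j i)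
        (fun i => star (u j i))) ∘ Sum.inr = star (u j) := rfl
    rw [hcl, hcr]
    rw [Matrix.zero_mulVec, Matrix.zero_mulVec, zero_add, add_zero, Matrix.mulVec_smul,
      hkey j, hkey2 j]
    funext x
    have hE := star_exp_mul' (γ j)
    cases x with
    | inl i =>
      simp only [Sum.elim_inl, Pi.smul_apply, smul_eq_mul, Pi.star_apply]
      rw [hγ j]
      cases s <;> norm_num <;> ring
    | inr i =>
      simp only [Sum.elim_inr, Pi.smul_apply, smul_eq_mul, Pi.star_apply]
      rw [hγ j]
      simp only [star_mul', Complex.star_def, Complex.conj_ofReal]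
      have hE2 := hE
      rw [neg_mul] at hE2
      cases s <;> norm_num <;>
        first
        | linear_combination (lam j : ℂ) * (starRingEnd ℂ) (u j i) * hE
            + (lam j : ℂ) * (starRingEnd ℂ) (u j i) * hE2
        | linear_combination (-(lam j : ℂ)) * (starRingEnd ℂ) (u j i) * hE
            + (-(lam j : ℂ)) * (starRingEnd ℂ) (u j i) * hE2
        | linear_combination (lam j : ℂ) * (starRingEnd ℂ) (u j i) * hE
        | linear_combination (-(lam j : ℂ)) * (starRingEnd ℂ) (u j i) * hE
        | linear_combination (lam j : ℂ) * (starRingEnd ℂ) (u j i) * hE2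
        | linear_combination (-(lam j : ℂ)) * (starRingEnd ℂ) (u j i) * hE2
end

section
/- Let u : [0,1] → ℂ² be continuously differentiable with ‖u(t)‖ = 1 for all t, and let γ : [0,1] → ℝ be continuously differentiable. Define ψ(t) = (e^{−iγ(t)}·u(t), conj(u(t)))/√2 ∈ ℂ⁴. Then i·∫₀¹ ⟨ψ(t), ψ′(t)⟩ dt = (γ(1) − γ(0))/2, where ⟨·,·⟩ is the standard inner product on ℂ⁴ (conjugate-linear in the first argument). -/
open Matrix

/-- **Zak phase of a chiral Bloch band equals half the phase winding.**
If `u : [0,1] → ℂ²` is C¹ with `‖u(t)‖ = 1`, `γ : [0,1] → ℝ` is C¹, and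
`ψ(t) = (e^{-iγ(t)} u(t), conj u(t))/√2 ∈ ℂ⁴`, then
`i ∫₀¹ ⟨ψ(t), ψ'(t)⟩ dt = (γ(1) - γ(0))/2`. -/
theorem zak_phase_eq_half_phase_change
    (u : ℝ → Fin 2 → ℂ) (γ : ℝ → ℝ)
    (hu : ContDiff ℝ 1 u) (hγ : ContDiff ℝ 1 γ)
    (hnorm : ∀ t ∈ Set.Icc (0 : ℝ) 1, star (u t) ⬝ᵥ u t = 1)
    (ψ : ℝ → (Fin 2 ⊕ Fin 2 → ℂ))
    (hψ : ∀ t : ℝ, ψ t = ((Real.sqrt 2 : ℂ))⁻¹ •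
      Sum.elim (fun i => Complex.exp (-(γ t : ℂ) * Complex.I) * u t i)
        (fun i => star (u t i))) :
    Complex.I * ∫ t in (0 : ℝ)..1, star (ψ t) ⬝ᵥ deriv ψ t
      = (((γ 1 - γ 0) / 2 : ℝ) : ℂ) := by
  classical
  have hud : Differentiable ℝ u := hu.differentiable one_ne_zero
  have hγd : Differentiable ℝ γ := hγ.differentiable one_ne_zero
  set c : ℂ := ((Real.sqrt 2 : ℂ))⁻¹ with hc
  set U : ℝ → Fin 2 → ℂ := deriv u with hU
  set G : ℝ → ℝ := deriv γ with hG
  have hui : ∀ (t : ℝ) (i : Fin 2), HasDerivAt (fun s => u s i) (U t i) t := fun t i =>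
    hasDerivAt_pi.mp (hud t).hasDerivAt i
  have hγt : ∀ t : ℝ, HasDerivAt γ (G t) t := fun t => (hγd t).hasDerivAt
  set e : ℝ → ℂ := fun t => Complex.exp (-(γ t : ℂ) * Complex.I) with he
  have hexp : ∀ t : ℝ, HasDerivAt e (e t * (-(G t : ℂ) * Complex.I)) t := by
    intro t
    have h1 : HasDerivAt (fun s : ℝ => -(γ s : ℂ) * Complex.I) (-(G t : ℂ) * Complex.I) t :=
      ((hγt t).ofReal_comp.neg).mul_const _
    exact h1.cexp
  have hse : ∀ s : ℝ, star (e s) * e s = 1 := by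
    intro s
    have h1 : star (e s) = Complex.exp ((γ s : ℂ) * Complex.I) := by
      simp [he, Complex.star_def, ← Complex.exp_conj]
    rw [h1, he, ← Complex.exp_add,
      show (γ s : ℂ) * Complex.I + -(γ s : ℂ) * Complex.I = 0 by ring, Complex.exp_zero]
  have hconj : ∀ (f : ℝ → ℂ) (f' : ℂ) (t : ℝ), HasDerivAt f f' t →
      HasDerivAt (fun s => star (f s)) (star f') t := by
    intro f f' t hf
    have := Complex.conjCLE.toContinuousLinearMap.hasFDerivAt.comp_hasDerivAt t hf
    exact this
  set v : ℝ → (Fin 2 ⊕ Fin 2 → ℂ) := fun t =>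
    Sum.elim (fun i => e t * u t i) (fun i => star (u t i)) with hv
  set v' : ℝ → (Fin 2 ⊕ Fin 2 → ℂ) := fun t =>
    Sum.elim (fun i => e t * (-(G t : ℂ) * Complex.I) * u t i + e t * U t i)
      (fun i => star (U t i)) with hv'
  have hψfun : ψ = fun s => c • v s := funext fun s => by rw [hψ s, hv]
  have hvd : ∀ s : ℝ, HasDerivAt v (v' s) s := by
    intro s
    rw [hasDerivAt_pi]
    rintro (i | i)
    · exact (hexp s).mul (hui s i)
    · simpa [hv, hv'] using hconj _ _ s (hui s i)
  have hψd : ∀ s : ℝ, HasDerivAt ψ (c • v' s) s := by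
    intro s
    rw [hψfun]
    exact (hvd s).const_smul c
  have hc2 : star c * c = (2 : ℂ)⁻¹ := by
    rw [hc, star_inv₀, ← mul_inv]
    norm_num [Complex.star_def, Complex.conj_ofReal, ← Complex.ofReal_mul,
      Real.mul_self_sqrt]
  have key : ∀ s ∈ Set.Ioo (0 : ℝ) 1,
      star (ψ s) ⬝ᵥ deriv ψ s = -Complex.I / 2 * (G s : ℂ) := by
    intro s hs
    have h1 : star (u s 0) * u s 0 + star (u s 1) * u s 1 = 1 := by
      have := hnorm s (Set.Ioo_subset_Icc_self hs)
      simpa [dotProduct, Fin.sum_univ_two] using this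
    have hDh : HasDerivAt (fun x => star (u x) ⬝ᵥ u x)
        ((star (U s 0) * u s 0 + star (u s 0) * U s 0) +
         (star (U s 1) * u s 1 + star (u s 1) * U s 1)) s := by
      have h0 := (hconj _ _ s (hui s 0)).mul (hui s 0)
      have h1' := (hconj _ _ s (hui s 1)).mul (hui s 1)
      have := h0.add h1'
      convert this using 1
      · rfl
      · funext x
        simp [dotProduct, Fin.sum_univ_two]
    have h2 : (star (U s 0) * u s 0 + star (u s 0) * U s 0) +
        (star (U s 1) * u s 1 + star (u s 1) * U s 1) = 0 := by
      have hev : (fun x => star (u x) ⬝ᵥ u x) =ᶠ[nhds s] fun _ => (1 : ℂ) := by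
        filter_upwards [Ioo_mem_nhds hs.1 hs.2] with x hx
        exact hnorm x (Set.Ioo_subset_Icc_self hx)
      have hzero : deriv (fun x => star (u x) ⬝ᵥ u x) s = 0 := by
        rw [hev.deriv_eq, deriv_const]
      rw [← hDh.deriv]
      exact hzero
    have h3 := hse s
    rw [(hψd s).deriv, hψ s]
    simp only [hv', dotProduct, Fintype.sum_sum_type, Fin.sum_univ_two,
      Pi.star_apply, Pi.smul_apply, Sum.elim_inl, Sum.elim_inr, smul_eq_mul,
      star_mul']
    have hee : Complex.exp (-(γ s : ℂ) * Complex.I) = e s := rfl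
    rw [hee]
    simp only [star_star]
    linear_combination
      (star (e s) * e s * ((-(G s : ℂ) * Complex.I) *
          (star (u s 0) * u s 0 + star (u s 1) * u s 1) +
          (star (u s 0) * U s 0 + star (u s 1) * U s 1)) +
        (u s 0 * star (U s 0) + u s 1 * star (U s 1))) * hc2 +
      ((2 : ℂ)⁻¹ * ((-(G s : ℂ) * Complex.I) *
          (star (u s 0) * u s 0 + star (u s 1) * u s 1) +
          (star (u s 0) * U s 0 + star (u s 1) * U s 1))) * h3 +
      ((2 : ℂ)⁻¹ * (-(G s : ℂ) * Complex.I)) * h1 + (2 : ℂ)⁻¹ * h2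
  have hcong : (∫ t in (0 : ℝ)..1, star (ψ t) ⬝ᵥ deriv ψ t)
      = ∫ t in (0 : ℝ)..1, -Complex.I / 2 * (G t : ℂ) := by
    apply intervalIntegral.integral_congr_ae
    have h1 : {x : ℝ | x = 1}ᶜ ∈ MeasureTheory.ae MeasureTheory.volume :=
      MeasureTheory.compl_mem_ae_iff.mpr
        (by simpa using MeasureTheory.measure_singleton (1 : ℝ))
    filter_upwards [h1] with x hx hmem
    rw [Set.uIoc_of_le zero_le_one] at hmem
    exact key x ⟨hmem.1, lt_of_le_of_ne hmem.2 hx⟩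
  rw [hcong, intervalIntegral.integral_const_mul]
  have hint : (∫ t in (0 : ℝ)..1, (G t : ℂ)) = ((γ 1 - γ 0 : ℝ) : ℂ) := by
    rw [intervalIntegral.integral_ofReal]
    norm_cast
    exact intervalIntegral.integral_deriv_eq_sub (fun x _ => hγd x)
      ((hγ.continuous_deriv le_rfl).intervalIntegrable 0 1)
  rw [hint]
  push_cast
  linear_combination (-(((γ 1 : ℂ) - γ 0) / 2)) * Complex.I_mul_I
end

section
/- For θ ∈ [0, 2π], there exists ξ ∈ ℂ with |ξ| < 1 and 1 + e^{iθ} + e^{iθ/2}·ξ = 0 if and only if θ ∈ (2π/3, 4π/3). -/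
/-- **Existence range of zigzag out-of-plane edge states.**
For `θ ∈ [0, 2π]`, there exists `ξ ∈ ℂ` with `|ξ| < 1` and
`1 + e^{iθ} + e^{iθ/2} ξ = 0` if and only if `θ ∈ (2π/3, 4π/3)`. -/
theorem zigzag_edge_state_existence_range
    (θ : ℝ) (hθ : θ ∈ Set.Icc (0 : ℝ) (2 * Real.pi)) :
    (∃ ξ : ℂ, ‖ξ‖ < 1 ∧
        1 + Complex.exp ((θ : ℝ) * Complex.I)
          + Complex.exp (((θ / 2 : ℝ) : ℂ) * Complex.I) * ξ = 0)
      ↔ θ ∈ Set.Ioo (2 * Real.pi / 3) (4 * Real.pi / 3) := by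
  have hπ := Real.pi_pos
  obtain ⟨h0, h2π⟩ := hθ
  set e := Complex.exp (((θ / 2 : ℝ) : ℂ) * Complex.I) with he
  have hene : e ≠ 0 := Complex.exp_ne_zero _
  set c : ℝ := Real.cos (θ / 2) with hc
  have hsq : Complex.exp ((θ : ℝ) * Complex.I) = e * e := by
    rw [he, ← Complex.exp_add]
    congr 1
    push_cast
    ring
  have hkey : 1 + e * e = e * (2 * (c : ℂ)) := by
    have h1 : e = Complex.cos (θ / 2) + Complex.sin (θ / 2) * Complex.I := by
      rw [he, Complex.exp_mul_I]
      norm_num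
    have hcc : (c : ℂ) = Complex.cos (θ / 2) := by
      rw [hc, Complex.ofReal_cos]; norm_num
    rw [h1, hcc]
    have hpyth := Complex.sin_sq_add_cos_sq ((θ : ℂ) / 2)
    have hI := Complex.I_sq
    linear_combination (Complex.sin ((θ:ℂ)/2))^2 * hI - hpyth
  -- the equation determines ξ uniquely
  have heq : ∀ ξ : ℂ, (1 + Complex.exp ((θ : ℝ) * Complex.I) + e * ξ = 0) ↔ ξ = -(2 * (c : ℂ)) := by
    intro ξ
    rw [hsq]
    constructor
    · intro h
      have : e * ξ = e * (-(2 * (c : ℂ))) := by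
        have := hkey
        ring_nf at h this ⊢
        linear_combination h - this
      exact mul_left_cancel₀ hene this
    · intro h
      rw [h]
      linear_combination hkey
  have hnorm : ‖(-(2 * (c : ℂ)))‖ = 2 * |c| := by
    rw [norm_neg]
    rw [show (2 * (c : ℂ)) = ((2 * c : ℝ) : ℂ) by push_cast; ring]
    rw [Complex.norm_real, Real.norm_eq_abs, abs_mul]
    norm_num
  constructor
  · rintro ⟨ξ, hξ, hξeq⟩
    rw [heq ξ] at hξeq
    rw [hξeq, hnorm] at hξ
    have habs : |c| < 1 / 2 := by linarith
    rw [abs_lt] at habs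
    constructor
    · by_contra hcon
      push_neg at hcon
      have h1 : θ / 2 ≤ Real.pi / 3 := by linarith
      have : Real.cos (Real.pi / 3) ≤ c := by
        rcases lt_or_eq_of_le h1 with h | h
        · exact le_of_lt (Real.cos_lt_cos_of_nonneg_of_le_pi (by linarith) (by linarith) h)
        · rw [hc, h]
      rw [Real.cos_pi_div_three] at this
      linarith [habs.2]
    · by_contra hcon
      push_neg at hcon
      have h1 : 2 * Real.pi / 3 ≤ θ / 2 := by linarith
      have hc23 : Real.cos (2 * Real.pi / 3) = -(1/2) := by
        have : (2 : ℝ) * Real.pi / 3 = Real.pi - Real.pi / 3 := by ring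
        rw [this, Real.cos_pi_sub, Real.cos_pi_div_three]
      have : c ≤ Real.cos (2 * Real.pi / 3) := by
        rcases lt_or_eq_of_le h1 with h | h
        · exact le_of_lt (Real.cos_lt_cos_of_nonneg_of_le_pi (by linarith) (by linarith) h)
        · rw [hc, ← h]
      rw [hc23] at this
      linarith [habs.1]
  · rintro ⟨hl, hr⟩
    refine ⟨-(2 * (c : ℂ)), ?_, (heq _).2 rfl⟩
    rw [hnorm]
    have h1 : c < 1 / 2 := by
      have := Real.cos_lt_cos_of_nonneg_of_le_pi (x := Real.pi / 3) (y := θ / 2)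
        (by linarith) (by linarith) (by linarith)
      rwa [Real.cos_pi_div_three] at this
    have h2 : -(1/2) < c := by
      have := Real.cos_lt_cos_of_nonneg_of_le_pi (x := θ / 2) (y := 2 * Real.pi / 3)
        (by linarith) (by linarith) (by linarith)
      have hc23 : Real.cos (2 * Real.pi / 3) = -(1/2) := by
        have h3 : (2 : ℝ) * Real.pi / 3 = Real.pi - Real.pi / 3 := by ring
        rw [h3, Real.cos_pi_sub, Real.cos_pi_div_three]
      rw [hc23] at this
      linarith
    have : |c| < 1 / 2 := abs_lt.2 ⟨by linarith, h1⟩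
    linarith
end

section
/- Let n₁ = (√3/2, 1/2), n₂ = (−√3/2, 1/2), n₃ = (0, −1) in ℝ², let Gᵢ = 3·nᵢnᵢᵀ − I₂, and for θ ∈ [0, 2π] define the polynomial q_θ(ξ) = det( e^{iθ/2}·ξ·G₁ + e^{iθ}·G₂ + G₃ ) in the complex variable ξ. Then q_θ is a quadratic polynomial in ξ with leading coefficient −2·e^{iθ}, and: (i) if θ ∈ [0, 2π/3) ∪ (4π/3, 2π], then q_θ has exactly one root ξ (counted with multiplicity) with |ξ| < 1; (ii) if θ ∈ (2π/3, 4π/3), then q_θ has no root ξ with |ξ| < 1. -/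
open Matrix

set_option maxHeartbeats 2000000 in
open scoped Classical in
/-- **In-plane zigzag flat edge state count from roots of `det Ã(k∥, ξ)ᴴ`.**
With `Gᵢ = 3nᵢnᵢᵀ - I₂` the in-plane Green matrices, the function
`q_θ(ξ) = det(e^{iθ/2} ξ G₁ + e^{iθ} G₂ + G₃)` is a quadratic polynomial in `ξ`
with leading coefficient `-2e^{iθ}`, having exactly one root (with
multiplicity) inside the unit disk for `θ ∈ [0, 2π/3) ∪ (4π/3, 2π]` and none
for `θ ∈ (2π/3, 4π/3)`. -/
theorem inplane_zigzag_edge_state_count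
    (n₁ n₂ n₃ : Fin 2 → ℝ)
    (hn₁ : n₁ = ![Real.sqrt 3 / 2, 1 / 2])
    (hn₂ : n₂ = ![-(Real.sqrt 3) / 2, 1 / 2])
    (hn₃ : n₃ = ![0, -1])
    (G₁ G₂ G₃ : Matrix (Fin 2) (Fin 2) ℝ)
    (hG₁ : G₁ = (3 : ℝ) • Matrix.vecMulVec n₁ n₁ - 1)
    (hG₂ : G₂ = (3 : ℝ) • Matrix.vecMulVec n₂ n₂ - 1)
    (hG₃ : G₃ = (3 : ℝ) • Matrix.vecMulVec n₃ n₃ - 1)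
    (θ : ℝ) (hθ : θ ∈ Set.Icc (0 : ℝ) (2 * Real.pi)) :
    ∃ P : Polynomial ℂ,
      (∀ ξ : ℂ, P.eval ξ =
        ((Complex.exp (((θ / 2 : ℝ) : ℂ) * Complex.I) * ξ) • G₁.map Complex.ofReal
          + Complex.exp ((θ : ℝ) * Complex.I) • G₂.map Complex.ofReal
          + G₃.map Complex.ofReal).det) ∧
      P.degree = 2 ∧
      P.leadingCoeff = -2 * Complex.exp ((θ : ℝ) * Complex.I) ∧
      (θ ∈ Set.Ico (0 : ℝ) (2 * Real.pi / 3) ∪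
          Set.Ioc (4 * Real.pi / 3) (2 * Real.pi) →
        Multiset.card (P.roots.filter (fun ξ => ‖ξ‖ < 1)) = 1) ∧
      (θ ∈ Set.Ioo (2 * Real.pi / 3) (4 * Real.pi / 3) →
        Multiset.card (P.roots.filter (fun ξ => ‖ξ‖ < 1)) = 0) := by
  obtain ⟨hθ0, hθ2π⟩ := hθ
  obtain ⟨w, hw⟩ : ∃ w, Complex.exp (((θ / 2 : ℝ) : ℂ) * Complex.I) = w := ⟨_, rfl⟩
  have hw2 : Complex.exp ((θ : ℝ) * Complex.I) = w ^ 2 := by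
    rw [← hw, sq, ← Complex.exp_add]; congr 1; push_cast; ring
  have hwne : w ≠ 0 := hw ▸ Complex.exp_ne_zero _
  obtain ⟨c, hc⟩ : ∃ c, Real.cos (θ / 2) = c := ⟨_, rfl⟩
  have hc1 : c ≤ 1 := hc ▸ Real.cos_le_one _
  have hcm1 : -1 ≤ c := hc ▸ Real.neg_one_le_cos _
  have hcsq : 24 - 15 * c ^ 2 ≥ 0 := by nlinarith
  obtain ⟨d, hdd⟩ : ∃ d, Real.sqrt (24 - 15 * c ^ 2) = d := ⟨_, rfl⟩
  have hd0 : 0 ≤ d := hdd ▸ Real.sqrt_nonneg _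
  have hd2 : d ^ 2 = 24 - 15 * c ^ 2 := hdd ▸ Real.sq_sqrt hcsq
  have hd3 : 3 ≤ d := by nlinarith
  obtain ⟨r₁, hr₁⟩ : ∃ r, (11 * c / 8 - 3 * d / 8 : ℝ) = r := ⟨_, rfl⟩
  obtain ⟨r₂, hr₂⟩ : ∃ r, (11 * c / 8 + 3 * d / 8 : ℝ) = r := ⟨_, rfl⟩
  have hcw : 2 * (c : ℂ) * w = w ^ 2 + 1 := by
    rw [← hc, ← hw, Complex.ofReal_cos]
    push_cast
    rw [Complex.exp_mul_I]
    linear_combination Complex.sin_sq_add_cos_sq ((θ:ℂ)/2) -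
      (Complex.sin ((θ:ℂ)/2)) ^ 2 * Complex.I_sq
  have hd2c : ((d : ℝ) : ℂ) ^ 2 = 24 - 15 * ((c : ℝ) : ℂ) ^ 2 := by exact_mod_cast hd2
  have hr1c : ((r₁ : ℝ) : ℂ) = 11 * (c:ℂ) / 8 - 3 * (d:ℂ) / 8 := by
    rw [← hr₁]; push_cast; ring
  have hr2c : ((r₂ : ℝ) : ℂ) = 11 * (c:ℂ) / 8 + 3 * (d:ℂ) / 8 := by
    rw [← hr₂]; push_cast; ring
  refine ⟨Polynomial.C (-2 * w ^ 2) *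
      ((Polynomial.X - Polynomial.C ((r₁ : ℝ) : ℂ)) *
        (Polynomial.X - Polynomial.C ((r₂ : ℝ) : ℂ))), ?_, ?_, ?_, ?_, ?_⟩
  · intro ξ
    have hs3 : ((Real.sqrt 3 : ℝ) : ℂ) ^ 2 = 3 := by
      norm_cast; rw [sq]; exact Real.mul_self_sqrt (by norm_num)
    trans (-2 * w^2 * ξ^2 + 11/4 * (w^3 + w) * ξ - 2 * w^4 + 11/4 * w^2 - 2)
    · simp only [Polynomial.eval_mul, Polynomial.eval_sub, Polynomial.eval_X,
        Polynomial.eval_C, hr1c, hr2c]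
      linear_combination ((11/4)*ξ*w - 2*(2*(c:ℂ)*w + w^2 + 1)) * hcw + (9/32)*w^2 * hd2c
    · rw [Matrix.det_fin_two, hw2, hw]
      simp [hG₁, hG₂, hG₃, hn₁, hn₂, hn₃, Matrix.vecMulVec_apply, Matrix.one_apply]
      linear_combination -((-(9/16) * (w*ξ - w^2)^2 + (3/2)*w*ξ - (3/16)*w^2*ξ^2
          + (3/2)*w^2 - (3/8)*w^3*ξ - (3/16)*w^4) * hs3)
  · rw [Polynomial.degree_mul, Polynomial.degree_mul, Polynomial.degree_C (by
        simpa using hwne), Polynomial.degree_X_sub_C, Polynomial.degree_X_sub_C]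
    rfl
  · rw [Polynomial.leadingCoeff_mul, Polynomial.leadingCoeff_mul,
      Polynomial.leadingCoeff_C, (Polynomial.monic_X_sub_C _).leadingCoeff,
      (Polynomial.monic_X_sub_C _).leadingCoeff, hw2]
    ring
  · rw [Polynomial.roots_C_mul _ (by simpa using hwne), Polynomial.roots_mul
      (mul_ne_zero (Polynomial.X_sub_C_ne_zero _) (Polynomial.X_sub_C_ne_zero _)),
      Polynomial.roots_X_sub_C, Polynomial.roots_X_sub_C]
    intro hmem
    rw [Multiset.filter_add, Multiset.filter_singleton, Multiset.filter_singleton]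
    simp only [Complex.norm_real, Real.norm_eq_abs]
    rcases hmem with ⟨h0, h1⟩ | ⟨h0, h1⟩
    · -- θ ∈ [0, 2π/3), c > 1/2
      have hcgt : 1/2 < c := by
        have := Real.cos_lt_cos_of_nonneg_of_le_pi (by linarith : (0:ℝ) ≤ θ/2)
          (by linarith [Real.pi_pos] : Real.pi/3 ≤ Real.pi) (by linarith : θ/2 < Real.pi/3)
        rwa [Real.cos_pi_div_three, hc] at this
      have hA : (0:ℝ) < 8 + 11 * c := by linarith
      have hprod : (0:ℝ) < (2*c - 1) * (16*c + 19) :=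
        mul_pos (by linarith) (by linarith)
      have h1abs : |r₁| < 1 := by
        rw [abs_lt]
        constructor
        · nlinarith [hd2, hd0, hprod, hA, hr₁]
        · nlinarith [hd3, hc1, hr₁]
      have h2abs : ¬ |r₂| < 1 := by
        push_neg
        have : (1:ℝ) ≤ r₂ := by nlinarith [hd3, hr₂]
        exact le_trans this (le_abs_self _)
      rw [if_pos h1abs, if_neg h2abs]
      rfl
    · -- θ ∈ (4π/3, 2π], c < -1/2
      have hclt : c < -(1/2) := by
        have h23 : Real.cos (2 * Real.pi / 3) = -(1/2) := by
          rw [show 2 * Real.pi / 3 = Real.pi - Real.pi/3 by ring, Real.cos_pi_sub,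
            Real.cos_pi_div_three]
        have := Real.cos_lt_cos_of_nonneg_of_le_pi
          (by linarith [Real.pi_pos] : (0:ℝ) ≤ 2 * Real.pi / 3)
          (by linarith : θ/2 ≤ Real.pi) (by linarith : 2 * Real.pi / 3 < θ/2)
        rw [h23, hc] at this
        linarith
      have hprod : (0:ℝ) < (2*c + 1) * (16*c - 19) :=
        mul_pos_of_neg_of_neg (by linarith) (by linarith)
      have hprod2 : (0:ℝ) < -((2*c - 1) * (16*c + 19)) := by nlinarith
      have h1abs : ¬ |r₁| < 1 := by
        push_neg
        have hle : r₁ ≤ -1 := by nlinarith [hd3, hr₁]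
        calc (1:ℝ) ≤ -r₁ := by linarith
        _ ≤ |r₁| := neg_le_abs _
      have h2abs : |r₂| < 1 := by
        rw [abs_lt]
        constructor
        · nlinarith [hd2, hd0, hprod2, hr₂]
        · nlinarith [hd2, hd0, hprod, hr₂]
      rw [if_neg h1abs, if_pos h2abs]
      rfl
  · rw [Polynomial.roots_C_mul _ (by simpa using hwne), Polynomial.roots_mul
      (mul_ne_zero (Polynomial.X_sub_C_ne_zero _) (Polynomial.X_sub_C_ne_zero _)),
      Polynomial.roots_X_sub_C, Polynomial.roots_X_sub_C]
    intro hmem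
    obtain ⟨h0, h1⟩ := hmem
    rw [Multiset.filter_add, Multiset.filter_singleton, Multiset.filter_singleton]
    simp only [Complex.norm_real, Real.norm_eq_abs]
    have hcu : c < 1/2 := by
      have := Real.cos_lt_cos_of_nonneg_of_le_pi (by linarith [Real.pi_pos] : (0:ℝ) ≤ Real.pi/3)
        (by linarith : θ/2 ≤ Real.pi) (by linarith : Real.pi/3 < θ/2)
      rwa [Real.cos_pi_div_three, hc] at this
    have hcl : -(1/2) < c := by
      have h23 : Real.cos (2 * Real.pi / 3) = -(1/2) := by
        rw [show 2 * Real.pi / 3 = Real.pi - Real.pi/3 by ring, Real.cos_pi_sub,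
          Real.cos_pi_div_three]
      have := Real.cos_lt_cos_of_nonneg_of_le_pi (by linarith : (0:ℝ) ≤ θ/2)
        (by linarith [Real.pi_pos] : 2 * Real.pi / 3 ≤ Real.pi)
        (by linarith : θ/2 < 2 * Real.pi / 3)
      rw [h23, hc] at this
      linarith
    have hprod1 : (0:ℝ) < -((2*c - 1) * (16*c + 19)) := by nlinarith
    have hprod2 : (0:ℝ) < -((2*c + 1) * (16*c - 19)) := by nlinarith
    have h1abs : ¬ |r₁| < 1 := by
      push_neg
      have hle : r₁ ≤ -1 := by nlinarith [hd2, hd0, hprod1, hr₁]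
      calc (1:ℝ) ≤ -r₁ := by linarith
      _ ≤ |r₁| := neg_le_abs _
    have h2abs : ¬ |r₂| < 1 := by
      push_neg
      have : (1:ℝ) ≤ r₂ := by nlinarith [hd2, hd0, hprod2, hr₂]
      exact le_trans this (le_abs_self _)
    rw [if_neg h1abs, if_neg h2abs]
    rfl
end
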